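/- Let H be an N×N negative semidefinite Hermitian matrix admitting a sum-of-squares decomposition H = −Σ_{j=0}^{m−1} A_j† A_j. Define the dilated Hermitian matrix 𝒜 = Σ_{j=0}^{m−1} (|0⟩⟨j+1| ⊗ A_j† + |j+1⟩⟨0| ⊗ A_j) acting on ℂ^{m+1} ⊗ ℂ^N. Then 𝒜 is Hermitian and (⟨0| ⊗ I)(−𝒜²)(|0⟩ ⊗ I) = H, i.e. the top-left N×N block of −𝒜² equals H. -/

import Mathlib

open Matrix
open scoped Kronecker

lemma kron_conjT {l n : ℕ} (X : Matrix (Fin l) (Fin l) ℂ) (Y : Matrix (Fin n) (Fin n) ℂ) :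
    (X ⊗ₖ Y)ᴴ = Xᴴ ⊗ₖ Yᴴ := by
  ext ⟨a, b⟩ ⟨c, d⟩
  simp [Matrix.conjTranspose_apply, mul_comm]

lemma stdB_conjT {l : ℕ} (i j : Fin l) :
    (Matrix.single i j (1:ℂ))ᴴ = Matrix.single j i (1:ℂ) := by
  ext a b
  simp [Matrix.conjTranspose_apply, Matrix.single, and_comm, apply_ite]

theorem stmt15 {m N : ℕ} (A : Fin m → Matrix (Fin N) (Fin N) ℂ)
    (H : Matrix (Fin N) (Fin N) ℂ)
    (hH : H = -∑ j, (A j)ᴴ * A j)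
    (𝒜 : Matrix (Fin (m+1) × Fin N) (Fin (m+1) × Fin N) ℂ)
    (h𝒜 : 𝒜 = ∑ j : Fin m,
      ((Matrix.single (0 : Fin (m+1)) j.succ (1:ℂ)) ⊗ₖ (A j)ᴴ +
       (Matrix.single (j.succ) (0 : Fin (m+1)) (1:ℂ)) ⊗ₖ (A j))) :
    𝒜ᴴ = 𝒜 ∧ ∀ p q : Fin N, (-(𝒜 * 𝒜)) (0, p) (0, q) = H p q := by
  subst h𝒜 hH
  constructor
  · rw [Matrix.conjTranspose_sum]
    refine Finset.sum_congr rfl fun j _ => ?_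
    rw [Matrix.conjTranspose_add, kron_conjT, kron_conjT, stdB_conjT, stdB_conjT,
      Matrix.conjTranspose_conjTranspose]
    exact add_comm _ _
  · intro p q
    simp [Matrix.mul_apply, Matrix.sum_apply, Matrix.single,
      Fintype.sum_prod_type, Finset.sum_mul, Finset.mul_sum, Fin.succ_ne_zero,
      eq_comm (a := (0 : Fin (m+1)))]
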